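/- Let P be a span program on n boolean variables with data (V, t, A, Π(·)) as below, let x ∈ {0,1}^n and s ∈ [0,∞)^n. Consider the following system in unknowns ψ_V ∈ V, ψ_I ∈ ℂ^I, ψ_0 ∈ ℂ, φ_I ∈ ℂ^I (the eigenvalue-zero eigenvector equations of the span-program graph, omitting the output constraint): (a) ψ_0 t + A φ_I = 0; (b) (1 − Π(x)) φ_I = 0; (d) A† ψ_V + (1 − Π(x)) ψ_I = 0. Then: (i) the system has a solution with ψ_0 ≠ 0 if and only if f_P(x) = 1, and it has a solution with ⟨t, ψ_V⟩ ≠ 0 if and only if f_P(x) = 0. Quantitatively: (ii) if f_P(x) = 1, there is a solution with ψ_V = 0 and ψ_I = 0 satisfying |ψ_0|² / (|ψ_0|² + ‖S φ_I‖²) ≥ 1 / (1 + wsize_s(P, x)); (iii) if f_P(x) = 0 and w' ∈ V is an optimal witness (⟨t, w'⟩ = 1, Π(x) A† w' = 0, ‖S A† w'‖² = wsize_s(P, x)), there is a solution with ψ_0 = 0 and φ_I = 0 satisfying |⟨t, ψ_V⟩|² / (‖ψ_V‖² + ‖S ψ_I‖²) ≥ 1 / (‖w'‖² + wsize_s(P,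 x)). -/

import Mathlib

open scoped ComplexInnerProductSpace

/-- A span program on `n` boolean variables: an inner product space `ℂ^d`, a target vector,
and input vectors indexed by `Fin m`, each either free (`label i = none`) or labeled by a
pair `(j, b)` (`label i = some (j, b)`, meaning `i ∈ I_{j,b}`). -/
structure SpanProgram (n : ℕ) : Type where
  d : ℕ
  m : ℕ
  label : Fin m → Option (Fin n × Bool)
  target : EuclideanSpace ℂ (Fin d)
  input : Fin m → EuclideanSpace ℂ (Fin d)

namespace SpanProgram

variable {n : ℕ}

/-- Input vector `i` is available on input `x`: it is free, or labeled `(j, x_j)` for some `j`. -/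
def avail (P : SpanProgram n) (x : Fin n → Bool) (i : Fin P.m) : Prop :=
  P.label i = none ∨ ∃ j : Fin n, P.label i = some (j, x j)

instance (P : SpanProgram n) (x : Fin n → Bool) (i : Fin P.m) : Decidable (P.avail x i) :=
  inferInstanceAs (Decidable (P.label i = none ∨ ∃ j : Fin n, P.label i = some (j, x j)))

/-- The boolean function computed by `P`:  `f_P(x) = 1` iff the target is in the range of
`A ∘ Π(x)`, i.e. the target is a linear combination of the available input vectors. -/
def eval (P : SpanProgram n) (x : Fin n → Bool) : Prop :=
  ∃ w : Fin P.m → ℂ, ∑ i, (if P.avail x i then w i else 0) • P.input i = P.target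

/-- The squared cost weight of coordinate `i`:  `s j` if `i ∈ I_{j,b}`, and `0` if `i` is free.
Thus `‖S w‖² = ∑ i, P.cw s i * ‖w i‖²`. -/
def cw (P : SpanProgram n) (s : Fin n → ℝ) (i : Fin P.m) : ℝ :=
  match P.label i with
  | none => 0
  | some jb => s jb.1

open Classical in
/-- The witness size of `P` on input `x` with costs `s`. -/
noncomputable def wsizex (P : SpanProgram n) (s : Fin n → ℝ) (x : Fin n → Bool) : ℝ :=
  if P.eval x then
    sInf { r : ℝ | ∃ w : Fin P.m → ℂ,
      (∑ i, (if P.avail x i then w i else 0) • P.input i = P.target) ∧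
      r = ∑ i, P.cw s i * ‖w i‖ ^ 2 }
  else
    sInf { r : ℝ | ∃ w' : EuclideanSpace ℂ (Fin P.d), ⟪P.target, w'⟫ = 1 ∧
      (∀ i, P.avail x i → ⟪P.input i, w'⟫ = 0) ∧
      r = ∑ i, P.cw s i * ‖⟪P.input i, w'⟫‖ ^ 2 }

/-- The witness size of `P` with costs `s`, restricted to the domain `D`:
`max_{x ∈ D} wsize_s(P, x)`. -/
noncomputable def wsizeD (P : SpanProgram n) (s : Fin n → ℝ) (D : Set (Fin n → Bool)) : ℝ :=
  sSup { r : ℝ | ∃ x ∈ D, r = P.wsizex s x }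

end SpanProgram

namespace SpanProgram

variable {n : ℕ}

/-- `A ∘ Π(x)` as a linear map on Euclidean space. -/
noncomputable def Amap (P : SpanProgram n) (x : Fin n → Bool) :
    EuclideanSpace ℂ (Fin P.m) →ₗ[ℂ] EuclideanSpace ℂ (Fin P.d) where
  toFun w := ∑ i, (if P.avail x i then w i else 0) • P.input i
  map_add' w₁ w₂ := by
    rw [← Finset.sum_add_distrib]
    refine Finset.sum_congr rfl fun i _ => ?_
    by_cases h : P.avail x i <;> simp [h, add_smul]
  map_smul' c w := by
    simp only [RingHom.id_apply, Finset.smul_sum]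
    refine Finset.sum_congr rfl fun i _ => ?_
    by_cases h : P.avail x i <;> simp [h, smul_smul]

/-- The (squared-cost) scaling map `S`. -/
noncomputable def Smap (P : SpanProgram n) (s : Fin n → ℝ) :
    EuclideanSpace ℂ (Fin P.m) →ₗ[ℂ] EuclideanSpace ℂ (Fin P.m) where
  toFun w := WithLp.toLp 2 (fun i => (Real.sqrt (P.cw s i) : ℂ) * w i)
  map_add' w₁ w₂ := by
    ext i
    simp [PiLp.add_apply, mul_add]
  map_smul' c w := by
    ext i
    simp [PiLp.smul_apply, smul_eq_mul]
    ring

theorem cw_nonneg (P : SpanProgram n) {s : Fin n → ℝ} (hs : ∀ j, 0 ≤ s j) (i : Fin P.m) :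
    0 ≤ P.cw s i := by
  unfold cw
  cases P.label i with
  | none => exact le_refl 0
  | some jb => exact hs jb.1

theorem norm_Smap_sq (P : SpanProgram n) {s : Fin n → ℝ} (hs : ∀ j, 0 ≤ s j)
    (w : EuclideanSpace ℂ (Fin P.m)) :
    ‖P.Smap s w‖ ^ 2 = ∑ i, P.cw s i * ‖w i‖ ^ 2 := by
  rw [EuclideanSpace.norm_eq, Real.sq_sqrt (Finset.sum_nonneg fun i _ => sq_nonneg _)]
  refine Finset.sum_congr rfl fun i _ => ?_
  have : ‖(Smap P s w) i‖ = Real.sqrt (P.cw s i) * ‖w i‖ := by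
    show ‖(Real.sqrt (P.cw s i) : ℂ) * w i‖ = _
    rw [norm_mul, Complex.norm_real, Real.norm_eq_abs,
      abs_of_nonneg (Real.sqrt_nonneg _)]
  rw [this, mul_pow, Real.sq_sqrt (P.cw_nonneg hs i)]

theorem normSubOrthogonalProjectionLe {E : Type*} [NormedAddCommGroup E]
    [InnerProductSpace ℂ E] {U : Submodule ℂ E} [U.HasOrthogonalProjection] (y u : E)
    (hu : u ∈ U) : ‖y - U.orthogonalProjectionOnto y‖ ≤ ‖y - u‖ := by
  rw [← Submodule.starProjection_apply, Submodule.starProjection_minimal]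
  have hbdd : BddBelow (Set.range fun z : U => ‖y - z‖) := by
    refine ⟨0, ?_⟩
    rintro b ⟨z, rfl⟩
    exact norm_nonneg _
  exact ciInf_le hbdd ⟨u, hu⟩

/-- On a true input, the witness-size infimum is attained. -/
theorem exists_min_witness (P : SpanProgram n) (x : Fin n → Bool) (s : Fin n → ℝ)
    (hs : ∀ j, 0 ≤ s j) (hev : P.eval x) :
    ∃ w' : Fin P.m → ℂ,
      (∑ i, (if P.avail x i then w' i else 0) • P.input i = P.target) ∧
      ∀ w : Fin P.m → ℂ,
        (∑ i, (if P.avail x i then w i else 0) • P.input i = P.target) →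
        ∑ i, P.cw s i * ‖w' i‖ ^ 2 ≤ ∑ i, P.cw s i * ‖w i‖ ^ 2 := by
  obtain ⟨w0f, hw0⟩ := hev
  let w0 : EuclideanSpace ℂ (Fin P.m) := WithLp.toLp 2 w0f
  have hAw0 : P.Amap x w0 = P.target := hw0
  let S := P.Smap s
  let K := LinearMap.ker (P.Amap x)
  let U := K.map S
  obtain ⟨k, hk, hSk⟩ := (U.orthogonalProjectionOnto (S w0)).2
  have hkK : k ∈ K := hk
  refine ⟨WithLp.ofLp (w0 - k), ?_, ?_⟩
  · show P.Amap x (w0 - k) = P.target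
    rw [map_sub, hAw0, LinearMap.mem_ker.mp hkK, sub_zero]
  · intro w hw
    let wE : EuclideanSpace ℂ (Fin P.m) := WithLp.toLp 2 w
    have hAw : P.Amap x wE = P.target := hw
    have hq1 : ∑ i, P.cw s i * ‖(w0 - k) i‖ ^ 2 = ‖S (w0 - k)‖ ^ 2 :=
      (P.norm_Smap_sq hs _).symm
    have hq2 : ∑ i, P.cw s i * ‖w i‖ ^ 2 = ‖S wE‖ ^ 2 :=
      (P.norm_Smap_sq hs wE).symm
    rw [hq1, hq2]
    refine pow_le_pow_left₀ (norm_nonneg _) ?_ 2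
    have hKmem : w0 - wE ∈ K :=
      LinearMap.mem_ker.mpr (by rw [map_sub, hAw0, hAw, sub_self])
    have hUmem : S (w0 - wE) ∈ U := ⟨_, hKmem, rfl⟩
    have e1 : S (w0 - k) = S w0 - U.orthogonalProjectionOnto (S w0) := by
      rw [map_sub, hSk]
    have e2 : S wE = S w0 - S (w0 - wE) := by
      rw [map_sub]; abel
    rw [e1, e2]
    exact normSubOrthogonalProjectionLe _ _ hUmem

end SpanProgram


/-- eigenvalue-zero analysis of the span-program graph.  Consider the
eigenvalue-zero eigenvector equations of `A_{G_P(x)}`, omitting the constraint at the output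
vertex — equations (a) `ψ₀ t + A φ_I = 0`, (b) `(1 − Π(x)) φ_I = 0`,
(d) `A† ψ_V + (1 − Π(x)) ψ_I = 0` in unknowns `ψ_V, ψ_I, ψ₀, φ_I`.  Then: (i) a solution with
`ψ₀ ≠ 0` exists iff `f_P(x) = 1`, and a solution with `⟪t, ψ_V⟫ ≠ 0` exists iff `f_P(x) = 0`;
(ii) if `f_P(x) = 1` there is a solution with `ψ_V = 0`, `ψ_I = 0` whose squared overlap on
the output vertex is at least `1/(1 + wsize_s(P,x))`; (iii) if `f_P(x) = 0` and `w'` is an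
optimal witness, there is a solution with `ψ₀ = 0`, `φ_I = 0` satisfying
`|⟪t, ψ_V⟫|²/(‖ψ_V‖² + ‖S ψ_I‖²) ≥ 1/(‖w'‖² + wsize_s(P,x))`. -/
theorem spanProgram_graph_zero_eigenvector (n : ℕ) (P : SpanProgram n)
    (x : Fin n → Bool) (s : Fin n → ℝ) (hs : ∀ j, 0 ≤ s j) :
    -- (i), true case:
    ((∃ (ψV : EuclideanSpace ℂ (Fin P.d)) (ψI : Fin P.m → ℂ) (ψ0 : ℂ) (φI : Fin P.m → ℂ),
        (ψ0 • P.target + ∑ i, φI i • P.input i = 0) ∧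
        (∀ i, ¬ P.avail x i → φI i = 0) ∧
        (∀ i, ⟪P.input i, ψV⟫ + (if P.avail x i then 0 else ψI i) = 0) ∧
        ψ0 ≠ 0)
      ↔ P.eval x) ∧
    -- (i), false case:
    ((∃ (ψV : EuclideanSpace ℂ (Fin P.d)) (ψI : Fin P.m → ℂ) (ψ0 : ℂ) (φI : Fin P.m → ℂ),
        (ψ0 • P.target + ∑ i, φI i • P.input i = 0) ∧
        (∀ i, ¬ P.avail x i → φI i = 0) ∧
        (∀ i, ⟪P.input i, ψV⟫ + (if P.avail x i then 0 else ψI i) = 0) ∧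
        ⟪P.target, ψV⟫ ≠ 0)
      ↔ ¬ P.eval x) ∧
    -- (ii):
    (P.eval x →
      ∃ (ψ0 : ℂ) (φI : Fin P.m → ℂ),
        (ψ0 • P.target + ∑ i, φI i • P.input i = 0) ∧
        (∀ i, ¬ P.avail x i → φI i = 0) ∧
        1 / (1 + P.wsizex s x)
          ≤ ‖ψ0‖ ^ 2 / (‖ψ0‖ ^ 2 + ∑ i, P.cw s i * ‖φI i‖ ^ 2)) ∧
    -- (iii):
    (¬ P.eval x →
      ∀ w' : EuclideanSpace ℂ (Fin P.d),
        ⟪P.target, w'⟫ = 1 →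
        (∀ i, P.avail x i → ⟪P.input i, w'⟫ = 0) →
        (∑ i, P.cw s i * ‖⟪P.input i, w'⟫‖ ^ 2) = P.wsizex s x →
        ∃ (ψV : EuclideanSpace ℂ (Fin P.d)) (ψI : Fin P.m → ℂ),
          (∀ i, ⟪P.input i, ψV⟫ + (if P.avail x i then 0 else ψI i) = 0) ∧
          1 / (‖w'‖ ^ 2 + P.wsizex s x)
            ≤ ‖⟪P.target, ψV⟫‖ ^ 2 / (‖ψV‖ ^ 2 + ∑ i, P.cw s i * ‖ψI i‖ ^ 2)) := by

  classical
  have hcw : ∀ i, 0 ≤ P.cw s i := P.cw_nonneg hs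
  refine ⟨?_, ?_, ?_, ?_⟩
  · -- (i), true case
    constructor
    · rintro ⟨ψV, ψI, ψ0, φI, h1, h2, _h3, h4⟩
      refine ⟨fun i => -(φI i) / ψ0, ?_⟩
      have e1 : ∑ i, (if P.avail x i then -(φI i) / ψ0 else 0) • P.input i
          = ∑ i, (-(φI i) / ψ0) • P.input i := by
        refine Finset.sum_congr rfl fun i _ => ?_
        by_cases h : P.avail x i
        · simp [h]
        · simp [h, h2 i h]
      have e2 : ∑ i, (-(φI i) / ψ0) • P.input i
          = (-ψ0⁻¹) • ∑ i, φI i • P.input i := by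
        rw [Finset.smul_sum]
        refine Finset.sum_congr rfl fun i _ => ?_
        rw [smul_smul]
        congr 1
        field_simp
      have e3 : ∑ i, φI i • P.input i = -(ψ0 • P.target) :=
        eq_neg_of_add_eq_zero_right h1
      rw [e1, e2, e3, smul_neg, neg_smul, neg_neg, smul_smul,
        inv_mul_cancel₀ h4, one_smul]
    · rintro ⟨w, hw⟩
      refine ⟨0, 0, 1, fun i => -(if P.avail x i then w i else 0), ?_, ?_, ?_, one_ne_zero⟩
      · have : ∑ i, (-(if P.avail x i then w i else 0)) • P.input i
            = -∑ i, (if P.avail x i then w i else 0) • P.input i := by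
          rw [← Finset.sum_neg_distrib]
          exact Finset.sum_congr rfl fun i _ => (neg_smul _ _)
        rw [this, hw, one_smul, add_neg_cancel]
      · intro i hi; simp [hi]
      · intro i; simp
  · -- (i), false case
    constructor
    · rintro ⟨ψV, ψI, ψ0, φI, h1, h2, h3, h4⟩ ⟨w, hw⟩
      have horth : ∀ i, P.avail x i → ⟪P.input i, ψV⟫ = 0 := by
        intro i hi
        have := h3 i
        rwa [if_pos hi, add_zero] at this
      apply h4
      rw [← hw, sum_inner]
      refine Finset.sum_eq_zero fun i _ => ?_
      by_cases h : P.avail x i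
      · rw [if_pos h, inner_smul_left, horth i h, mul_zero]
      · rw [if_neg h, zero_smul, inner_zero_left]
    · intro hev
      set g : Fin P.m → EuclideanSpace ℂ (Fin P.d) :=
        fun i => if P.avail x i then P.input i else 0 with hg
      set M := Submodule.span ℂ (Set.range g) with hM
      have hgM : ∀ i, P.avail x i → P.input i ∈ M := by
        intro i hi
        have h1 : g i ∈ M := Submodule.subset_span (Set.mem_range_self i)
        have h2 : g i = P.input i := by rw [hg]; exact if_pos hi
        rwa [h2] at h1
      have htM : P.target ∉ M := by
        intro ht
        obtain ⟨c, hc⟩ := Submodule.mem_span_range_iff_exists_fun ℂ |>.mp ht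
        refine hev ⟨c, ?_⟩
        rw [← hc]
        refine Finset.sum_congr rfl fun i _ => ?_
        by_cases h : P.avail x i <;> simp [hg, h]
      set v := P.target - M.orthogonalProjectionOnto P.target with hv
      have hvO : v ∈ Mᗮ := Submodule.sub_starProjection_mem_orthogonal P.target
      have hv0 : v ≠ 0 := by
        intro h
        rw [hv, sub_eq_zero] at h
        exact htM (h ▸ (M.orthogonalProjectionOnto P.target).2)
      refine ⟨v, fun i => -⟪P.input i, v⟫, 0, 0, by simp, by simp, ?_, ?_⟩
      · intro i
        by_cases h : P.avail x i
        · rw [if_pos h, Submodule.inner_right_of_mem_orthogonal (hgM i h) hvO, add_zero]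
        · rw [if_neg h, add_neg_cancel]
      · have e1 : ⟪P.target, v⟫ = ⟪(P.target - v) + v, v⟫ := by rw [sub_add_cancel]
        have e2 : ⟪P.target - v, v⟫ = 0 := by
          have h2 : P.target - v = (M.orthogonalProjectionOnto P.target : EuclideanSpace ℂ (Fin P.d)) := by
            rw [hv, sub_sub_cancel]
          rw [h2]
          exact Submodule.inner_right_of_mem_orthogonal (M.orthogonalProjectionOnto P.target).2 hvO
        rw [e1, inner_add_left, e2, zero_add]
        exact inner_self_ne_zero.mpr hv0
  · -- (ii)
    intro hev
    obtain ⟨w', hw'A, hw'min⟩ := P.exists_min_witness x s hs hev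
    have hlb : ∑ i, P.cw s i * ‖w' i‖ ^ 2 ≤ P.wsizex s x := by
      rw [SpanProgram.wsizex, if_pos hev]
      refine le_csInf ⟨∑ i, P.cw s i * ‖w' i‖ ^ 2, w', hw'A, rfl⟩ ?_
      rintro r ⟨w, hw, rfl⟩
      exact hw'min w hw
    refine ⟨1, fun i => -(if P.avail x i then w' i else 0), ?_, ?_, ?_⟩
    · have : ∑ i, (-(if P.avail x i then w' i else 0)) • P.input i
          = -∑ i, (if P.avail x i then w' i else 0) • P.input i := by
        rw [← Finset.sum_neg_distrib]
        exact Finset.sum_congr rfl fun i _ => (neg_smul _ _)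
      rw [this, hw'A, one_smul, add_neg_cancel]
    · intro i hi; simp [hi]
    · have hCle : ∑ i, P.cw s i * ‖-(if P.avail x i then w' i else 0)‖ ^ 2
          ≤ ∑ i, P.cw s i * ‖w' i‖ ^ 2 := by
        refine Finset.sum_le_sum fun i _ => ?_
        by_cases h : P.avail x i
        · simp [h]
        · simp only [if_neg h, neg_zero, norm_zero]
          simpa using mul_nonneg (hcw i) (sq_nonneg ‖w' i‖)
      have hC0 : 0 ≤ ∑ i, P.cw s i * ‖-(if P.avail x i then w' i else 0)‖ ^ 2 :=
        Finset.sum_nonneg fun i _ => mul_nonneg (hcw i) (sq_nonneg _)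
      rw [norm_one, one_pow]
      exact one_div_le_one_div_of_le (by linarith) (by linarith)
  · -- (iii)
    intro hev w' hw1 hw2 hw3
    refine ⟨w', fun i => -⟪P.input i, w'⟫, ?_, ?_⟩
    · intro i
      by_cases h : P.avail x i
      · rw [if_pos h, hw2 i h, add_zero]
      · rw [if_neg h, add_neg_cancel]
    · have e1 : ∑ i, P.cw s i * ‖-⟪P.input i, w'⟫‖ ^ 2 = P.wsizex s x := by
        rw [← hw3]
        exact Finset.sum_congr rfl fun i _ => by rw [norm_neg]
      rw [hw1, e1, norm_one, one_pow]
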